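/- arXiv:2012.14638 — 3 statements merged into one kernel-verified Lean document; each statement's English description precedes it below -/
import Mathlib

section
/- For f, g : ω → ω with f ≤* g (i.e., f(n) ≤ g(n) for all but finitely many n), the least size of an infinite mad family for the ideal 𝓘(g) = ⨁_Fin Fin^{g(n)} is at most the least size of an infinite mad family for 𝓘(f) = ⨁_Fin Fin^{f(n)}; that is, 𝔞_{𝓘(g)} ≤ 𝔞_{𝓘(f)}. -/
/-- The underlying set of the `k`-fold Fubini power of `Fin`. -/
def FinPowSpace : ℕ → Type
  | 0 => PUnit
  | (k+1) => ℕ × FinPowSpace k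

/-- The Fubini powers of the ideal `Fin` of finite sets: `Fin^0` is the trivial ideal,
`Fin^{k+1} = Fin ⊗ Fin^k` (so `Fin^1 ≅ Fin`). -/
def FinPow : (k : ℕ) → Set (Set (FinPowSpace k))
  | 0 => {∅}
  | (k+1) => {X | {n : ℕ | {s | ((n, s) : FinPowSpace (k+1)) ∈ X} ∉ FinPow k}.Finite}

/-- `𝓘(f) = ⨁_Fin Fin^{f(n)}`, the Fubini sum over `Fin` of the ideals `Fin^{f(n)}`. -/
def IdealOf (f : ℕ → ℕ) : Set (Set (Σ n, FinPowSpace (f n))) :=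
  {X | {n : ℕ | {s | (⟨n, s⟩ : Σ n, FinPowSpace (f n)) ∈ X} ∉ FinPow (f n)}.Finite}

/-- An `𝓘`-almost disjoint family. -/
def ADFamily {α : Type*} (I : Set (Set α)) (𝓐 : Set (Set α)) : Prop :=
  (∀ A ∈ 𝓐, A ∉ I) ∧ ∀ A ∈ 𝓐, ∀ B ∈ 𝓐, A ≠ B → A ∩ B ∈ I

/-- An `𝓘`-mad family: maximal among `𝓘`-almost disjoint families. -/
def MadFamily {α : Type*} (I : Set (Set α)) (𝓐 : Set (Set α)) : Prop :=
  ADFamily I 𝓐 ∧ ∀ 𝓑, ADFamily I 𝓑 → 𝓐 ⊆ 𝓑 → 𝓑 = 𝓐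

/-- `𝔞_𝓘`: the least cardinality of an infinite `𝓘`-mad family. -/
noncomputable def aInv {α : Type} (I : Set (Set α)) : Cardinal :=
  sInf {c : Cardinal | ∃ 𝓐, MadFamily I 𝓐 ∧ 𝓐.Infinite ∧ Cardinal.mk ↥𝓐 = c}

def pt : (k : ℕ) → FinPowSpace k
  | 0 => PUnit.unit
  | (k+1) => ((0 : ℕ), pt k)

def projTo : (k k' : ℕ) → FinPowSpace k' → FinPowSpace k
  | 0, _, _ => PUnit.unit
  | (k+1), 0, _ => pt (k+1)
  | (k+1), (k'+1), s => ((s : ℕ × FinPowSpace k').1, projTo k k' (s : ℕ × FinPowSpace k').2)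

def Bset : (k k' : ℕ) → Set (FinPowSpace k') → Set (FinPowSpace k)
  | 0, k', Y => {_x | Y ∉ FinPow k'}
  | (_+1), 0, _ => ∅
  | (k+1), (k'+1), Y =>
      {p : ℕ × FinPowSpace k | p.2 ∈ Bset k k' {s | ((p.1, s) : FinPowSpace (k'+1)) ∈ Y}}

lemma finPow_zero (X : Set (FinPowSpace 0)) : X ∈ FinPow 0 ↔ X = ∅ := Iff.rfl

lemma finPow_succ (k : ℕ) (X : Set (FinPowSpace (k+1))) :
    X ∈ FinPow (k+1) ↔ {n : ℕ | {s | ((n, s) : FinPowSpace (k+1)) ∈ X} ∉ FinPow k}.Finite :=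
  Iff.rfl

lemma empty_mem_finPow (k : ℕ) : (∅ : Set (FinPowSpace k)) ∈ FinPow k := by
  induction k with
  | zero => rfl
  | succ k ih =>
    rw [finPow_succ]
    convert Set.finite_empty
    ext n
    simp only [Set.mem_setOf_eq, Set.mem_empty_iff_false, iff_false, not_not]
    exact ih

lemma univ_not_mem_finPow (k : ℕ) : (Set.univ : Set (FinPowSpace k)) ∉ FinPow k := by
  induction k with
  | zero =>
    intro h
    have : (PUnit.unit : FinPowSpace 0) ∈ (Set.univ : Set (FinPowSpace 0)) := Set.mem_univ _
    rw [show (Set.univ : Set (FinPowSpace 0)) = ∅ from h] at this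
    exact this
  | succ k ih =>
    rw [finPow_succ]
    intro h
    have : {n : ℕ | {s | ((n, s) : FinPowSpace (k+1)) ∈ (Set.univ : Set (FinPowSpace (k+1)))} ∉ FinPow k} = Set.univ := by
      ext n; exact iff_of_true ih (Set.mem_univ n)
    rw [this] at h
    exact Set.infinite_univ h

lemma finPow_mono (k : ℕ) {A B : Set (FinPowSpace k)} (h : A ⊆ B) (hB : B ∈ FinPow k) :
    A ∈ FinPow k := by
  induction k with
  | zero =>
    rw [finPow_zero] at *
    exact Set.subset_eq_empty h hB
  | succ k ih =>
    rw [finPow_succ] at *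
    refine hB.subset fun n hn => ?_
    simp only [Set.mem_setOf_eq] at hn ⊢
    exact fun hBn => hn (ih (fun s hs => h hs) hBn)

lemma finPow_union (k : ℕ) {A B : Set (FinPowSpace k)} (hA : A ∈ FinPow k) (hB : B ∈ FinPow k) :
    A ∪ B ∈ FinPow k := by
  induction k with
  | zero =>
    rw [finPow_zero] at *
    rw [hA, hB]; simp
  | succ k ih =>
    rw [finPow_succ] at *
    refine (hA.union hB).subset fun n hn => ?_
    simp only [Set.mem_setOf_eq, Set.mem_union] at hn ⊢
    by_contra hc
    push_neg at hc
    exact hn (ih hc.1 hc.2)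

lemma mem_Bset_zero (k' : ℕ) (Y : Set (FinPowSpace k')) (x : FinPowSpace 0) :
    x ∈ Bset 0 k' Y ↔ Y ∉ FinPow k' := Iff.rfl

lemma mem_Bset_succ (k k' : ℕ) (Y : Set (FinPowSpace (k'+1))) (n : ℕ) (x : FinPowSpace k) :
    ((n, x) : FinPowSpace (k+1)) ∈ Bset (k+1) (k'+1) Y
      ↔ x ∈ Bset k k' {s | ((n, s) : FinPowSpace (k'+1)) ∈ Y} := Iff.rfl

lemma Bset_spec : ∀ {k k' : ℕ}, k ≤ k' → ∀ (Y : Set (FinPowSpace k')),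
    (Y ∈ FinPow k' ↔ Bset k k' Y ∈ FinPow k) := by
  intro k
  induction k with
  | zero =>
    intro k' _ Y
    rw [finPow_zero]
    constructor
    · intro h
      ext x
      simp [mem_Bset_zero, h]
    · intro h
      by_contra hY
      have : (PUnit.unit : FinPowSpace 0) ∈ Bset 0 k' Y := hY
      rw [h] at this
      exact this
  | succ k ih =>
    intro k' hk Y
    obtain ⟨k'', rfl⟩ : ∃ k'', k' = k'' + 1 := ⟨k' - 1, by omega⟩
    have hk2 : k ≤ k'' := by omega
    rw [finPow_succ, finPow_succ]
    have : ∀ n : ℕ, ({s | ((n, s) : FinPowSpace (k''+1)) ∈ Y} ∉ FinPow k'')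
        ↔ ({s | ((n, s) : FinPowSpace (k+1)) ∈ Bset (k+1) (k''+1) Y} ∉ FinPow k) := by
      intro n
      rw [not_iff_not]
      exact ih hk2 _
    have hset : {n : ℕ | {s | ((n, s) : FinPowSpace (k+1)) ∈ Bset (k+1) (k''+1) Y} ∉ FinPow k}
        = {n : ℕ | {s | ((n, s) : FinPowSpace (k''+1)) ∈ Y} ∉ FinPow k''} := by
      ext n; exact (this n).symm
    rw [hset]

lemma projTo_surj : ∀ {k k' : ℕ}, k ≤ k' → Function.Surjective (projTo k k') := by
  intro k
  induction k with
  | zero =>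
    intro k' _ x
    exact ⟨pt k', rfl⟩
  | succ k ih =>
    intro k' hk x
    obtain ⟨k'', rfl⟩ : ∃ k'', k' = k'' + 1 := ⟨k' - 1, by omega⟩
    obtain ⟨n, y⟩ : ℕ × FinPowSpace k := x
    obtain ⟨t, ht⟩ := ih (by omega : k ≤ k'') y
    exact ⟨((n, t) : FinPowSpace (k''+1)), by simp [projTo, ht]; rfl⟩

lemma Bset_univ : ∀ {k k' : ℕ}, k ≤ k' → Bset k k' (Set.univ : Set (FinPowSpace k')) = Set.univ := by
  intro k
  induction k with
  | zero =>
    intro k' _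
    ext x
    simp only [Set.mem_univ, iff_true]
    exact univ_not_mem_finPow k'
  | succ k ih =>
    intro k' hk
    obtain ⟨k'', rfl⟩ : ∃ k'', k' = k'' + 1 := ⟨k' - 1, by omega⟩
    ext x
    obtain ⟨n, y⟩ : ℕ × FinPowSpace k := x
    refine iff_of_true ?_ (Set.mem_univ _)
    show y ∈ Bset k k'' {s | ((n, s) : FinPowSpace (k''+1)) ∈ (Set.univ : Set (FinPowSpace (k''+1)))}
    have : {s | ((n, s) : FinPowSpace (k''+1)) ∈ (Set.univ : Set (FinPowSpace (k''+1)))}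
        = (Set.univ : Set (FinPowSpace k'')) := rfl
    rw [this, ih (by omega : k ≤ k'')]
    trivial

lemma Bset_preimage_inter : ∀ {k k' : ℕ}, k ≤ k' →
    ∀ (A : Set (FinPowSpace k)) (Y : Set (FinPowSpace k')),
    Bset k k' (projTo k k' ⁻¹' A ∩ Y) = A ∩ Bset k k' Y := by
  intro k
  induction k with
  | zero =>
    intro k' _ A Y
    ext x
    obtain ⟨⟩ : PUnit := x
    by_cases hA : PUnit.unit ∈ A
    · have h1 : projTo 0 k' ⁻¹' A = Set.univ := by
        ext s; simp only [Set.mem_preimage, Set.mem_univ, iff_true]; exact hA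
      rw [h1, Set.univ_inter]
      exact ⟨fun h => ⟨hA, h⟩, fun h => h.2⟩
    · have h1 : projTo 0 k' ⁻¹' A = ∅ := by
        ext s; simp only [Set.mem_preimage, Set.mem_empty_iff_false, iff_false]; exact hA
      rw [h1, Set.empty_inter]
      refine iff_of_false ?_ (fun h => hA h.1)
      show ¬ ((∅ : Set (FinPowSpace k')) ∉ FinPow k')
      exact not_not.2 (empty_mem_finPow k')
  | succ k ih =>
    intro k' hk A Y
    obtain ⟨k'', rfl⟩ : ∃ k'', k' = k'' + 1 := ⟨k' - 1, by omega⟩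
    ext x
    obtain ⟨n, y⟩ : ℕ × FinPowSpace k := x
    show y ∈ Bset k k'' {s | ((n, s) : FinPowSpace (k''+1)) ∈ (projTo (k+1) (k''+1) ⁻¹' A ∩ Y)}
      ↔ ((n, y) : FinPowSpace (k+1)) ∈ A ∧ y ∈ Bset k k'' {s | ((n, s) : FinPowSpace (k''+1)) ∈ Y}
    have hcol : {s | ((n, s) : FinPowSpace (k''+1)) ∈ (projTo (k+1) (k''+1) ⁻¹' A ∩ Y)}
        = projTo k k'' ⁻¹' {z | ((n, z) : FinPowSpace (k+1)) ∈ A}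
          ∩ {s | ((n, s) : FinPowSpace (k''+1)) ∈ Y} := rfl
    rw [hcol, ih (by omega : k ≤ k'')]
    rfl

lemma proj_preimage_finPow {k k' : ℕ} (h : k ≤ k') (A : Set (FinPowSpace k)) :
    projTo k k' ⁻¹' A ∈ FinPow k' ↔ A ∈ FinPow k := by
  rw [Bset_spec h]
  have h2 : Bset k k' (projTo k k' ⁻¹' A) = A := by
    have h3 := Bset_preimage_inter h A Set.univ
    rwa [Set.inter_univ, Bset_univ h, Set.inter_univ] at h3
  rw [h2]

section Global
variable (f g : ℕ → ℕ)

def col (n : ℕ) (X : Set (Σ n, FinPowSpace (f n))) : Set (FinPowSpace (f n)) :=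
  {s | (⟨n, s⟩ : Σ n, FinPowSpace (f n)) ∈ X}

lemma mem_idealOf (X : Set (Σ n, FinPowSpace (f n))) :
    X ∈ IdealOf f ↔ {n : ℕ | col f n X ∉ FinPow (f n)}.Finite := Iff.rfl

def PiMap : (Σ n, FinPowSpace (g n)) → Σ n, FinPowSpace (f n) :=
  fun x => ⟨x.1, projTo (f x.1) (g x.1) x.2⟩

def BG (Y : Set (Σ n, FinPowSpace (g n))) : Set (Σ n, FinPowSpace (f n)) :=
  {x | x.2 ∈ Bset (f x.1) (g x.1) (col g x.1 Y)}

lemma col_BG (n : ℕ) (Y : Set (Σ n, FinPowSpace (g n))) :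
    col f n (BG f g Y) = Bset (f n) (g n) (col g n Y) := rfl

lemma col_preimage (n : ℕ) (A : Set (Σ n, FinPowSpace (f n))) :
    col g n (PiMap f g ⁻¹' A) = projTo (f n) (g n) ⁻¹' (col f n A) := rfl

lemma col_inter (n : ℕ) (X Y : Set (Σ n, FinPowSpace (g n))) :
    col g n (X ∩ Y) = col g n X ∩ col g n Y := rfl

variable (hfg : {n : ℕ | g n < f n}.Finite)
include hfg

lemma BG_ideal_iff (Y : Set (Σ n, FinPowSpace (g n))) :
    Y ∈ IdealOf g ↔ BG f g Y ∈ IdealOf f := by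
  rw [mem_idealOf, mem_idealOf]
  constructor
  · intro h
    refine (h.union hfg).subset fun n hn => ?_
    simp only [Set.mem_setOf_eq, Set.mem_union] at hn ⊢
    by_contra hc
    push_neg at hc
    rw [col_BG] at hn
    exact hn ((Bset_spec hc.2 _).1 hc.1)
  · intro h
    refine (h.union hfg).subset fun n hn => ?_
    simp only [Set.mem_setOf_eq, Set.mem_union] at hn ⊢
    by_contra hc
    push_neg at hc
    rw [col_BG] at hc
    exact hn ((Bset_spec hc.2 _).2 hc.1)

lemma preimage_ideal_iff (A : Set (Σ n, FinPowSpace (f n))) :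
    A ∈ IdealOf f ↔ PiMap f g ⁻¹' A ∈ IdealOf g := by
  rw [mem_idealOf, mem_idealOf]
  constructor
  · intro h
    refine (h.union hfg).subset fun n hn => ?_
    simp only [Set.mem_setOf_eq, Set.mem_union] at hn ⊢
    by_contra hc
    push_neg at hc
    rw [col_preimage] at hn
    exact hn ((proj_preimage_finPow hc.2 _).2 hc.1)
  · intro h
    refine (h.union hfg).subset fun n hn => ?_
    simp only [Set.mem_setOf_eq, Set.mem_union] at hn ⊢
    by_contra hc
    push_neg at hc
    rw [col_preimage] at hc
    exact hn ((proj_preimage_finPow hc.2 _).1 hc.1)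

lemma D_small : {x : Σ n, FinPowSpace (f n) | g x.1 < f x.1} ∈ IdealOf f := by
  rw [mem_idealOf]
  refine hfg.subset fun n hn => ?_
  simp only [Set.mem_setOf_eq] at hn ⊢
  by_contra hc
  have : col f n {x : Σ n, FinPowSpace (f n) | g x.1 < f x.1} = ∅ := by
    ext s; simp only [col, Set.mem_setOf_eq, Set.mem_empty_iff_false, iff_false]; exact hc
  rw [this] at hn
  exact hn (empty_mem_finPow _)

end Global

section Extra

lemma idealOf_mono (f : ℕ → ℕ) {X Y : Set (Σ n, FinPowSpace (f n))} (h : X ⊆ Y)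
    (hY : Y ∈ IdealOf f) : X ∈ IdealOf f := by
  rw [mem_idealOf] at hY ⊢
  refine hY.subset fun n hn => ?_
  simp only [Set.mem_setOf_eq] at hn ⊢
  exact fun hc => hn (finPow_mono _ (fun s hs => h hs) hc)

lemma idealOf_union (f : ℕ → ℕ) {X Y : Set (Σ n, FinPowSpace (f n))} (hX : X ∈ IdealOf f)
    (hY : Y ∈ IdealOf f) : X ∪ Y ∈ IdealOf f := by
  rw [mem_idealOf] at hX hY ⊢
  refine (hX.union hY).subset fun n hn => ?_
  simp only [Set.mem_setOf_eq, Set.mem_union] at hn ⊢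
  by_contra hc
  push_neg at hc
  exact hn (finPow_union _ hc.1 hc.2)

lemma idealOf_empty (f : ℕ → ℕ) : (∅ : Set (Σ n, FinPowSpace (f n))) ∈ IdealOf f := by
  rw [mem_idealOf]
  convert Set.finite_empty
  ext n
  simp only [Set.mem_setOf_eq, Set.mem_empty_iff_false, iff_false, not_not]
  have : col f n (∅ : Set (Σ n, FinPowSpace (f n))) = ∅ := rfl
  rw [this]
  exact empty_mem_finPow _

lemma preimage_injOn (f g : ℕ → ℕ) (hfg : {n : ℕ | g n < f n}.Finite)
    {𝓐 : Set (Set (Σ n, FinPowSpace (f n)))} (hAD : ADFamily (IdealOf f) 𝓐) :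
    Set.InjOn (fun A => PiMap f g ⁻¹' A) 𝓐 := by
  intro A hA B hB hAB
  by_contra hne
  have hsub : A ⊆ (A ∩ B) ∪ {x : Σ n, FinPowSpace (f n) | g x.1 < f x.1} := by
    rintro ⟨n, s⟩ hx
    rcases le_or_gt (f n) (g n) with h | h
    · left
      refine ⟨hx, ?_⟩
      obtain ⟨t, ht⟩ := projTo_surj h s
      have hmem : (⟨n, t⟩ : Σ n, FinPowSpace (g n)) ∈ PiMap f g ⁻¹' A := by
        show (⟨n, projTo (f n) (g n) t⟩ : Σ n, FinPowSpace (f n)) ∈ A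
        rw [ht]; exact hx
      have hAB' : PiMap f g ⁻¹' A = PiMap f g ⁻¹' B := hAB
      rw [hAB'] at hmem
      have : (⟨n, projTo (f n) (g n) t⟩ : Σ n, FinPowSpace (f n)) ∈ B := hmem
      rwa [ht] at this
    · right; exact h
  exact hAD.1 A hA (idealOf_mono f hsub
    (idealOf_union f (hAD.2 A hA B hB hne) (D_small f g hfg)))

lemma mad_transfer (f g : ℕ → ℕ) (hfg : {n : ℕ | g n < f n}.Finite)
    {𝓐 : Set (Set (Σ n, FinPowSpace (f n)))} (hmad : MadFamily (IdealOf f) 𝓐) :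
    MadFamily (IdealOf g) ((fun A => PiMap f g ⁻¹' A) '' 𝓐) := by
  constructor
  · constructor
    · rintro _ ⟨A, hA, rfl⟩ hmem
      exact hmad.1.1 A hA ((preimage_ideal_iff f g hfg A).2 hmem)
    · rintro _ ⟨A, hA, rfl⟩ _ ⟨B, hB, rfl⟩ hne
      have hABne : A ≠ B := fun h => hne (by rw [h])
      have h2 := hmad.1.2 A hA B hB hABne
      rw [← Set.preimage_inter]
      exact (preimage_ideal_iff f g hfg _).1 h2
  · intro 𝓑' h𝓑' hsub
    refine Set.Subset.antisymm (fun Y hY => ?_) hsub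
    by_contra hYnot
    have hYpos : Y ∉ IdealOf g := h𝓑'.1 Y hY
    have hBGpos : BG f g Y ∉ IdealOf f := fun h => hYpos ((BG_ideal_iff f g hfg Y).2 h)
    -- find A ∈ 𝓐 with A ∩ BG f g Y positive
    have hex : ∃ A ∈ 𝓐, A ∩ BG f g Y ∉ IdealOf f := by
      by_contra hall
      push_neg at hall
      have hBGnotmem : BG f g Y ∉ 𝓐 := by
        intro hmem
        have := hall (BG f g Y) hmem
        rw [Set.inter_self] at this
        exact hBGpos this
      have hAD' : ADFamily (IdealOf f) (insert (BG f g Y) 𝓐) := by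
        constructor
        · intro A hA
          rcases Set.mem_insert_iff.1 hA with rfl | hA
          · exact hBGpos
          · exact hmad.1.1 A hA
        · intro A hA B hB hne
          rcases Set.mem_insert_iff.1 hA with rfl | hA <;>
            rcases Set.mem_insert_iff.1 hB with rfl | hB
          · exact absurd rfl hne
          · rw [Set.inter_comm]; exact hall B hB
          · exact hall A hA
          · exact hmad.1.2 A hA B hB hne
      have := hmad.2 _ hAD' (Set.subset_insert _ _)
      exact hBGnotmem (this ▸ Set.mem_insert _ _)
    obtain ⟨A, hA, hposint⟩ := hex
    have claim : PiMap f g ⁻¹' A ∩ Y ∉ IdealOf g := by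
      intro h
      apply hposint
      have hBG : BG f g (PiMap f g ⁻¹' A ∩ Y) ∈ IdealOf f := (BG_ideal_iff f g hfg _).1 h
      rw [mem_idealOf] at hBG ⊢
      refine (hBG.union hfg).subset fun n hn => ?_
      rcases le_or_gt (f n) (g n) with h' | h'
      · left
        have hcol : col f n (BG f g (PiMap f g ⁻¹' A ∩ Y)) = col f n (A ∩ BG f g Y) := by
          rw [col_BG]
          rw [show col g n (PiMap f g ⁻¹' A ∩ Y)
              = projTo (f n) (g n) ⁻¹' (col f n A) ∩ col g n Y from rfl]
          rw [Bset_preimage_inter h']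
          rfl
        show col f n (BG f g (PiMap f g ⁻¹' A ∩ Y)) ∉ FinPow (f n)
        rw [hcol]
        exact hn
      · right; exact h'
    have hmem : PiMap f g ⁻¹' A ∈ 𝓑' := hsub ⟨A, hA, rfl⟩
    have hne : Y ≠ PiMap f g ⁻¹' A := fun h => hYnot ⟨A, hA, h.symm⟩
    have := h𝓑'.2 Y hY _ hmem hne
    rw [Set.inter_comm] at this
    exact claim this

lemma exists_infinite_mad (f : ℕ → ℕ) :
    ∃ 𝓐, MadFamily (IdealOf f) 𝓐 ∧ 𝓐.Infinite := by
  classical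
  set A0 : ℕ → Set (Σ n, FinPowSpace (f n)) := fun i => {x | (Nat.unpair x.1).1 = i} with hA0
  have hpos : ∀ i, A0 i ∉ IdealOf f := by
    intro i h
    rw [mem_idealOf] at h
    have hsub : {n : ℕ | (Nat.unpair n).1 = i} ⊆ {n : ℕ | col f n (A0 i) ∉ FinPow (f n)} := by
      intro n hn
      have hcol : col f n (A0 i) = Set.univ := by
        ext s
        simp only [col, hA0, Set.mem_setOf_eq, Set.mem_univ, iff_true]
        exact hn
      simp only [Set.mem_setOf_eq, hcol]
      exact univ_not_mem_finPow _
    have hinfset : {n : ℕ | (Nat.unpair n).1 = i}.Infinite := by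
      apply Set.infinite_of_injective_forall_mem (f := fun t : ℕ => Nat.pair i t)
      · intro a b hab
        have := congrArg (fun m => (Nat.unpair m).2) hab
        simpa [Nat.unpair_pair] using this
      · intro a
        simp [Nat.unpair_pair]
    exact hinfset (h.subset hsub)
  have hdisj : ∀ i j, i ≠ j → A0 i ∩ A0 j = ∅ := by
    intro i j hij
    ext x
    simp only [hA0, Set.mem_inter_iff, Set.mem_setOf_eq, Set.mem_empty_iff_false, iff_false]
    rintro ⟨h1, h2⟩
    exact hij (h1 ▸ h2 ▸ rfl)
  have hinj : Function.Injective A0 := by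
    intro i j hij
    by_contra hne
    have hx : (⟨Nat.pair i 0, pt (f (Nat.pair i 0))⟩ : Σ n, FinPowSpace (f n)) ∈ A0 i := by
      simp [hA0, Nat.unpair_pair]
    rw [hij] at hx
    simp only [hA0, Set.mem_setOf_eq, Nat.unpair_pair] at hx
    exact hne hx
  have hAD0 : ADFamily (IdealOf f) (Set.range A0) := by
    constructor
    · rintro _ ⟨i, rfl⟩; exact hpos i
    · rintro _ ⟨i, rfl⟩ _ ⟨j, rfl⟩ hne
      have hij : i ≠ j := fun h => hne (h ▸ rfl)
      rw [hdisj i j hij]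
      exact idealOf_empty f
  set S : Set (Set (Set (Σ n, FinPowSpace (f n)))) :=
    {𝓑 | ADFamily (IdealOf f) 𝓑 ∧ Set.range A0 ⊆ 𝓑} with hS
  have hzorn : ∀ c ⊆ S, IsChain (· ⊆ ·) c → c.Nonempty →
      ∃ ub ∈ S, ∀ s ∈ c, s ⊆ ub := by
    intro c hc hchain hne
    refine ⟨⋃₀ c, ⟨⟨?_, ?_⟩, ?_⟩, fun s hs => Set.subset_sUnion_of_mem hs⟩
    · rintro A ⟨𝓑, h𝓑, hA⟩
      exact (hc h𝓑).1.1 A hA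
    · rintro A ⟨𝓑1, h1, hA⟩ B ⟨𝓑2, h2, hB⟩ hne'
      rcases hchain.total h1 h2 with h | h
      · exact (hc h2).1.2 A (h hA) B hB hne'
      · exact (hc h1).1.2 A hA B (h hB) hne'
    · obtain ⟨𝓑, h𝓑⟩ := hne
      exact (hc h𝓑).2.trans (Set.subset_sUnion_of_mem h𝓑)
  obtain ⟨𝓜, hsub0, hmax⟩ :=
    zorn_subset_nonempty S hzorn (Set.range A0) ⟨hAD0, subset_rfl⟩
  refine ⟨𝓜, ⟨hmax.prop.1, ?_⟩, ?_⟩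
  · intro 𝓑 h𝓑 hss
    have hb : 𝓑 ∈ S := ⟨h𝓑, hmax.prop.2.trans hss⟩
    exact Set.Subset.antisymm (hmax.2 hb hss) hss
  · exact (Set.infinite_range_of_injective hinj).mono hsub0

theorem stmt_8x (f g : ℕ → ℕ) (hfg : {n : ℕ | g n < f n}.Finite) :
    aInv (IdealOf g) ≤ aInv (IdealOf f) := by
  have hne : {c : Cardinal | ∃ 𝓐, MadFamily (IdealOf f) 𝓐 ∧ 𝓐.Infinite
      ∧ Cardinal.mk ↥𝓐 = c}.Nonempty := by
    obtain ⟨𝓐, hm, hinf⟩ := exists_infinite_mad f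
    exact ⟨Cardinal.mk ↥𝓐, 𝓐, hm, hinf, rfl⟩
  have hsub : {c : Cardinal | ∃ 𝓐, MadFamily (IdealOf f) 𝓐 ∧ 𝓐.Infinite
        ∧ Cardinal.mk ↥𝓐 = c}
      ⊆ {c : Cardinal | ∃ 𝓑, MadFamily (IdealOf g) 𝓑 ∧ 𝓑.Infinite
        ∧ Cardinal.mk ↥𝓑 = c} := by
    rintro c ⟨𝓐, hm, hinf, rfl⟩
    have hinjOn := preimage_injOn f g hfg hm.1
    refine ⟨(fun A => PiMap f g ⁻¹' A) '' 𝓐, mad_transfer f g hfg hm, ?_, ?_⟩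
    · exact (Set.infinite_image_iff hinjOn).2 hinf
    · exact Cardinal.mk_image_eq_of_injOn _ _ hinjOn
  exact csInf_le_csInf (OrderBot.bddBelow _) hne hsub

end Extra

/-- if `f ≤* g` then `𝔞_{𝓘(g)} ≤ 𝔞_{𝓘(f)}`. -/
theorem stmt_8 (f g : ℕ → ℕ) (hfg : {n : ℕ | g n < f n}.Finite) :
    aInv (IdealOf g) ≤ aInv (IdealOf f) := by
  exact stmt_8x f g hfg
end

section
/- Domain extension: let 𝓖 be a cofinitary group of permutations of ω, s a finite injective partial function ω → ω, w ∈ W_{𝓖,X} a word with no proper conjugate subwords, and n ∈ ω \ dom(s). Then for all but finitely many n' ∈ ω, setting s' = s ∪ {(n, n')}, s' is injective and fix(w[s']) = fix(w[s]). -/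
/-- Letters of words in `𝓖 ∗ 𝔽(X)`: elements of `𝓖`, or `X` (`true`) / `X⁻¹` (`false`). -/
abbrev Letter (G : Subgroup (Equiv.Perm ℕ)) := (↥G) ⊕ Bool

/-- Composition of partial functions: apply `g`, then `f`. -/
def pcomp (f g : ℕ → Option ℕ) : ℕ → Option ℕ := fun n => (g n).bind f

open Classical in
/-- Inverse of a partial injection. -/
noncomputable def pinv (s : ℕ → Option ℕ) : ℕ → Option ℕ :=
  fun m => if h : ∃ n, s n = some m then some h.choose else none

/-- `s` is a finite injective partial function from `ω` to `ω`. -/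
def FinInj (s : ℕ → Option ℕ) : Prop :=
  (∀ a b c : ℕ, s a = some c → s b = some c → a = b) ∧ {n : ℕ | s n ≠ none}.Finite

/-- Evaluation of a single letter, substituting `s` for `X` and `s⁻¹` for `X⁻¹`. -/
noncomputable def lEval (G : Subgroup (Equiv.Perm ℕ)) (s : ℕ → Option ℕ) :
    Letter G → ℕ → Option ℕ
  | Sum.inl g => fun n => some ((g : Equiv.Perm ℕ) n)
  | Sum.inr true => s
  | Sum.inr false => pinv s

/-- `w[s]`: evaluation of a word (leftmost letter applied last). -/
noncomputable def ev (G : Subgroup (Equiv.Perm ℕ)) (s : ℕ → Option ℕ) :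
    List (Letter G) → ℕ → Option ℕ
  | [] => fun n => some n
  | a :: l => pcomp (lEval G s a) (ev G s l)

/-- The formal inverse of a word. -/
def wordInv (G : Subgroup (Equiv.Perm ℕ)) (l : List (Letter G)) : List (Letter G) :=
  (l.map (fun a => match a with
    | Sum.inl g => Sum.inl g⁻¹
    | Sum.inr b => Sum.inr (!b))).reverse

/-- The set of fixed points of a partial function. -/
def fixSet (f : ℕ → Option ℕ) : Set ℕ := {m : ℕ | f m = some m}

/-- `w` has no proper conjugated subword: it is not of the form `v⁻¹ w₀ v` with `v` nonempty. -/
def NoProperConjSub (G : Subgroup (Equiv.Perm ℕ)) (w : List (Letter G)) : Prop :=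
  ¬ ∃ v w₀ : List (Letter G), v ≠ [] ∧ w = wordInv G v ++ w₀ ++ v

/-- `w` is a reduced word: no identity letters from `𝓖`, no two adjacent letters
from `𝓖`, and no adjacent cancelling pair `X X⁻¹` or `X⁻¹ X`. -/
def ReducedWord (G : Subgroup (Equiv.Perm ℕ)) (w : List (Letter G)) : Prop :=
  (∀ g : ↥G, Sum.inl g ∈ w → g ≠ 1) ∧
  w.Chain' (fun a b =>
    match a, b with
    | Sum.inl _, Sum.inl _ => False
    | Sum.inr b₁, Sum.inr b₂ => b₁ = b₂
    | _, _ => True)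

/-- `𝓖` is a cofinitary group: every nonidentity element has finitely many fixed points. -/
def Cofinitary (G : Subgroup (Equiv.Perm ℕ)) : Prop :=
  ∀ g : ↥G, g ≠ 1 → {m : ℕ | (g : Equiv.Perm ℕ) m = m}.Finite

-- ===================== auxiliary development =====================

/-- `x` avoids the domain, range of `s` and the point `n`. -/
def Avoid (s : ℕ → Option ℕ) (n x : ℕ) : Prop :=
  s x = none ∧ (∀ a, s a ≠ some x) ∧ x ≠ n

lemma pinv_some {s : ℕ → Option ℕ} {m a : ℕ} (h : pinv s m = some a) : s a = some m := by
  unfold pinv at h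
  by_cases hex : ∃ n, s n = some m
  · rw [dif_pos hex] at h
    exact (Option.some.inj h) ▸ hex.choose_spec
  · rw [dif_neg hex] at h
    exact absurd h (by simp)

lemma some_pinv {s : ℕ → Option ℕ} (hinj : ∀ a b c : ℕ, s a = some c → s b = some c → a = b)
    {m a : ℕ} (h : s a = some m) : pinv s m = some a := by
  unfold pinv
  have hex : ∃ x, s x = some m := ⟨a, h⟩
  rw [dif_pos hex]
  exact congrArg some (hinj _ _ _ hex.choose_spec h)

lemma pinv_none {s : ℕ → Option ℕ} {m : ℕ} (h : ¬ ∃ x, s x = some m) : pinv s m = none := by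
  unfold pinv; rw [dif_neg h]

lemma update_some_iff {s : ℕ → Option ℕ} {n n' v k : ℕ} :
    Function.update s n (some n') v = some k ↔ (v = n ∧ k = n') ∨ (v ≠ n ∧ s v = some k) := by
  by_cases hv : v = n
  · subst hv; simp [eq_comm]
  · simp [Function.update_of_ne hv, hv]

lemma update_inj {s : ℕ → Option ℕ} (hinj : ∀ a b c : ℕ, s a = some c → s b = some c → a = b)
    {n n' : ℕ} (hr : ∀ a, s a ≠ some n') :
    ∀ a b c : ℕ, Function.update s n (some n') a = some c →
      Function.update s n (some n') b = some c → a = b := by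
  intro a b c ha hb
  rcases update_some_iff.mp ha with ⟨rfl, rfl⟩ | ⟨ha1, ha2⟩
  · rcases update_some_iff.mp hb with ⟨rfl, -⟩ | ⟨hb1, hb2⟩
    · rfl
    · exact absurd hb2 (hr b)
  · rcases update_some_iff.mp hb with ⟨rfl, rfl⟩ | ⟨hb1, hb2⟩
    · exact absurd ha2 (hr a)
    · exact hinj _ _ _ ha2 hb2

lemma pinv_update_self {s : ℕ → Option ℕ}
    (hinj : ∀ a b c : ℕ, s a = some c → s b = some c → a = b)
    {n n' : ℕ} (hr : ∀ a, s a ≠ some n') :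
    pinv (Function.update s n (some n')) n' = some n :=
  some_pinv (update_inj hinj hr) (by simp)

lemma pinv_update_ne {s : ℕ → Option ℕ}
    (hinj : ∀ a b c : ℕ, s a = some c → s b = some c → a = b)
    {n n' : ℕ} (hn : s n = none) (hr : ∀ a, s a ≠ some n') {v : ℕ} (hv : v ≠ n') :
    pinv (Function.update s n (some n')) v = pinv s v := by
  by_cases hex : ∃ a, s a = some v
  · obtain ⟨a, ha⟩ := hex
    have han : a ≠ n := by rintro rfl; rw [hn] at ha; cases ha
    have h' : Function.update s n (some n') a = some v := by
      rw [Function.update_of_ne han]; exact ha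
    rw [some_pinv hinj ha, some_pinv (update_inj hinj hr) h']
  · have hex' : ¬ ∃ a, Function.update s n (some n') a = some v := by
      rintro ⟨a, ha⟩
      rcases update_some_iff.mp ha with ⟨-, rfl⟩ | ⟨-, h2⟩
      · exact hv rfl
      · exact hex ⟨a, h2⟩
    rw [pinv_none hex, pinv_none hex']

variable {G : Subgroup (Equiv.Perm ℕ)}

lemma perm_inv_apply_self (f : Equiv.Perm ℕ) (x : ℕ) : f⁻¹ (f x) = x := Equiv.symm_apply_apply f x

lemma perm_apply_inv_self (f : Equiv.Perm ℕ) (x : ℕ) : f (f⁻¹ x) = x := Equiv.apply_symm_apply f x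

lemma ev_cons (s : ℕ → Option ℕ) (a : Letter G) (l : List (Letter G)) (m : ℕ) :
    ev G s (a :: l) m = (ev G s l m).bind (lEval G s a) := rfl

lemma ev_drop (s : ℕ → Option ℕ) (w : List (Letter G)) (m : ℕ) {j : ℕ} (hj : j < w.length) :
    ev G s (w.drop j) m = (ev G s (w.drop (j+1)) m).bind (lEval G s (w[j])) := by
  rw [List.drop_eq_getElem_cons hj, ev_cons]

lemma ev_mono (s : ℕ → Option ℕ)
    (hinj : ∀ a b c : ℕ, s a = some c → s b = some c → a = b)
    {n : ℕ} (hn : s n = none) {n' : ℕ} (hr : ∀ a, s a ≠ some n') :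
    ∀ (w : List (Letter G)) (m k : ℕ), ev G s w m = some k →
      ev G (Function.update s n (some n')) w m = some k := by
  intro w
  induction w with
  | nil => intro m k h; exact h
  | cons a l ih =>
    intro m k h
    rw [ev_cons] at h ⊢
    obtain ⟨j, hj, hlj⟩ := Option.bind_eq_some_iff.mp h
    rw [ih m j hj, Option.bind_some]
    cases a with
    | inl g => exact hlj
    | inr b =>
      cases b with
      | true =>
        have hjn : j ≠ n := by rintro rfl; simp only [lEval] at hlj; rw [hn] at hlj; cases hlj
        simp only [lEval] at hlj ⊢
        rw [Function.update_of_ne hjn]; exact hlj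
      | false =>
        simp only [lEval] at hlj ⊢
        have hk : s k = some j := pinv_some hlj
        have hjn' : j ≠ n' := by rintro rfl; exact hr k hk
        rw [pinv_update_ne hinj hn hr hjn']; exact hlj

lemma getElem_congr' {α : Type*} {l : List α} {i j : ℕ} (h : i = j) (hj : j < l.length) :
    l[i]'(h ▸ hj) = l[j] := by subst h; rfl

lemma eq_cons_drop {α : Type*} (l : List α) (h : 0 < l.length) : l = l[0] :: l.drop 1 := by
  conv_lhs => rw [← List.drop_zero (l := l)]
  rw [List.drop_eq_getElem_cons h]

lemma conj1 (w : List (Letter G)) (hw : NoProperConjSub G w) (hL : 2 ≤ w.length)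
    (h0 : w[0]'(by omega) = Sum.inr true)
    (h1 : w[w.length - 1]'(by omega) = Sum.inr false) : False := by
  apply hw
  refine ⟨[Sum.inr false], (w.drop 1).dropLast, by simp, ?_⟩
  have hne : w.drop 1 ≠ [] := by
    rw [← List.length_pos_iff]; simp; omega
  have e2 : (w.drop 1).dropLast ++ [(w.drop 1).getLast hne] = w.drop 1 :=
    List.dropLast_append_getLast hne
  have e3 : (w.drop 1).getLast hne = Sum.inr false := by
    rw [List.getLast_drop, List.getLast_eq_getElem, ← h1]
  have e1 : w = w[0] :: w.drop 1 := eq_cons_drop w (by omega)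
  rw [e1, h0, ← e2, e3]
  simp [wordInv]

lemma conj2 (w : List (Letter G)) (hw : NoProperConjSub G w) (g : ↥G) (hL : 4 ≤ w.length)
    (h0 : w[0]'(by omega) = Sum.inl g⁻¹)
    (h1 : w[1]'(by omega) = Sum.inr true)
    (h2 : w[w.length - 2]'(by omega) = Sum.inr false)
    (h3 : w[w.length - 1]'(by omega) = Sum.inl g) : False := by
  apply hw
  have hul : (w.drop 2).length = w.length - 2 := by simp
  have hne : w.drop 2 ≠ [] := by rw [← List.length_pos_iff]; omega
  have hne2 : (w.drop 2).dropLast ≠ [] := by rw [← List.length_pos_iff]; simp; omega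
  refine ⟨[Sum.inr false, Sum.inl g], (w.drop 2).dropLast.dropLast, by simp, ?_⟩
  have e2 : (w.drop 2).dropLast ++ [(w.drop 2).getLast hne] = w.drop 2 :=
    List.dropLast_append_getLast hne
  have e2' : (w.drop 2).dropLast.dropLast ++ [(w.drop 2).dropLast.getLast hne2] =
      (w.drop 2).dropLast := List.dropLast_append_getLast hne2
  have e3 : (w.drop 2).getLast hne = Sum.inl g := by
    rw [List.getLast_drop, List.getLast_eq_getElem, ← h3]
  have e4 : (w.drop 2).dropLast.getLast hne2 = Sum.inr false := by
    rw [List.getLast_eq_getElem, List.getElem_dropLast, List.getElem_drop, ← h2]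
    apply getElem_congr'
    simp
    omega
  have e1 : w = w[0] :: w[1] :: w.drop 2 := by
    conv_lhs => rw [← List.drop_zero (l := w),
      List.drop_eq_getElem_cons (show 0 < w.length by omega),
      List.drop_eq_getElem_cons (show 1 < w.length by omega)]
  calc w = w[0] :: w[1] :: (w.drop 2) := e1
    _ = w[0] :: w[1] :: ((w.drop 2).dropLast ++ [(w.drop 2).getLast hne]) := by rw [e2]
    _ = w[0] :: w[1] :: (((w.drop 2).dropLast.dropLast ++
          [(w.drop 2).dropLast.getLast hne2]) ++ [(w.drop 2).getLast hne]) := by rw [e2']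
    _ = wordInv G [Sum.inr false, Sum.inl g] ++ (w.drop 2).dropLast.dropLast ++
          [Sum.inr false, Sum.inl g] := by rw [h0, h1, e3, e4]; simp [wordInv]

lemma main_aux (s : ℕ → Option ℕ)
    (hinj : ∀ a b c : ℕ, s a = some c → s b = some c → a = b)
    (w : List (Letter G)) (hred : ReducedWord G w) (hw : NoProperConjSub G w)
    (n : ℕ) (hn : s n = none) (n' : ℕ) (hA : Avoid s n n')
    (hg1 : ∀ g : ↥G, Sum.inl g ∈ w →
      Avoid s n ((g : Equiv.Perm ℕ) n') ∧ Avoid s n ((g : Equiv.Perm ℕ)⁻¹ n') ∧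
        (g : Equiv.Perm ℕ) n' ≠ n')
    (hg2 : ∀ g h : ↥G, Sum.inl g ∈ w → Sum.inl h ∈ w →
      (g : Equiv.Perm ℕ) * (h : Equiv.Perm ℕ) ≠ 1 →
      Avoid s n (((g : Equiv.Perm ℕ) * (h : Equiv.Perm ℕ)) n') ∧
      Avoid s n ((((g : Equiv.Perm ℕ) * (h : Equiv.Perm ℕ))⁻¹) n') ∧
      ((g : Equiv.Perm ℕ) * (h : Equiv.Perm ℕ)) n' ≠ n')
    (m : ℕ) (hm : ev G (Function.update s n (some n')) w m = some m) :
    ev G s w m = some m := by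
  obtain ⟨hA0, hA1, hA2⟩ := hA
  have hinj' := update_inj hinj (n := n) hA1
  have hs'n : Function.update s n (some n') n = some n' := by simp
  -- definedness of all partial evaluations
  have hsome : ∀ j : ℕ, ∃ cj : ℕ, ev G (Function.update s n (some n')) (w.drop j) m = some cj := by
    intro j
    induction j with
    | zero => exact ⟨m, by simpa using hm⟩
    | succ j ih =>
      obtain ⟨cj, hcj⟩ := ih
      by_cases hj : j < w.length
      · rw [ev_drop _ w m hj] at hcj
        obtain ⟨a, ha, -⟩ := Option.bind_eq_some_iff.mp hcj
        exact ⟨a, ha⟩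
      · rw [List.drop_eq_nil_of_le (by omega)]
        exact ⟨m, rfl⟩
  choose c hc using hsome
  have hc0 : c 0 = m := by
    have h1 := hc 0
    rw [List.drop_zero, hm] at h1
    exact (Option.some.inj h1).symm
  have hcL : ∀ j, w.length ≤ j → c j = m := by
    intro j hj
    have h1 := hc j
    rw [List.drop_eq_nil_of_le hj] at h1
    exact Option.some.inj h1.symm ▸ (Option.some.inj h1).symm
  have hstep : ∀ j : ℕ, j < w.length →
      lEval G (Function.update s n (some n')) (w[j]!) (c (j+1)) = some (c j) := by
    intro j hj
    have h1 := hc j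
    rw [ev_drop _ w m hj, hc (j+1), Option.bind_some] at h1
    rw [getElem!_pos w j hj]
    exact h1
  have hmem : ∀ j, j < w.length → w[j]! ∈ w := by
    intro j hj
    rw [getElem!_pos w j hj]
    exact List.getElem_mem hj
  have hchain : ∀ i, i + 1 < w.length →
      (match w[i]!, w[i+1]! with
        | Sum.inl _, Sum.inl _ => False
        | Sum.inr b₁, Sum.inr b₂ => b₁ = b₂
        | _, _ => True) := by
    intro i hi
    have h1 := List.isChain_iff_getElem.mp hred.2 i (by omega)
    rw [getElem!_pos w i (by omega), getElem!_pos w (i+1) hi]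
    exact h1
  have hstepG : ∀ j, j < w.length → ∀ g : ↥G, w[j]! = Sum.inl g →
      c j = (g : Equiv.Perm ℕ) (c (j+1)) := by
    intro j hj g hg
    have h1 := hstep j hj
    rw [hg] at h1
    simp only [lEval] at h1
    exact (Option.some.inj h1).symm
  have hstepX : ∀ j, j < w.length → w[j]! = Sum.inr true →
      Function.update s n (some n') (c (j+1)) = some (c j) := by
    intro j hj hx
    have h1 := hstep j hj
    rw [hx] at h1
    simpa only [lEval] using h1
  have hstepXi : ∀ j, j < w.length → w[j]! = Sum.inr false →
      Function.update s n (some n') (c j) = some (c (j+1)) := by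
    intro j hj hx
    have h1 := hstep j hj
    rw [hx] at h1
    simp only [lEval] at h1
    exact pinv_some h1
  have hentry : ∀ j, j < w.length → c j = n' →
      (w[j]! = Sum.inr true ∧ c (j+1) = n) ∨
      (∃ g : ↥G, w[j]! = Sum.inl g ∧ c (j+1) = (g : Equiv.Perm ℕ)⁻¹ n') := by
    intro j hj hcj
    rcases hwj : w[j]! with g | b
    · right
      refine ⟨g, rfl, ?_⟩
      have h1 := hstepG j hj g hwj
      rw [hcj] at h1
      rw [h1, perm_inv_apply_self]
    · cases b with
      | true =>
        have h1 := hstepX j hj hwj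
        rw [hcj] at h1
        rcases update_some_iff.mp h1 with ⟨h2, -⟩ | ⟨-, h3⟩
        · exact Or.inl ⟨rfl, h2⟩
        · exact absurd h3 (hA1 _)
      | false =>
        have h1 := hstepXi j hj hwj
        rw [hcj, Function.update_of_ne hA2, hA0] at h1
        cases h1
  have hexit : ∀ j, 0 < j → j ≤ w.length → c j = n' →
      (w[j-1]! = Sum.inr false ∧ c (j-1) = n) ∨
      (∃ g : ↥G, w[j-1]! = Sum.inl g ∧ c (j-1) = (g : Equiv.Perm ℕ) n') := by
    intro j hj0 hjL hcj
    have hj1 : j - 1 < w.length := by omega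
    have hsucc : j - 1 + 1 = j := by omega
    rcases hwj : w[j-1]! with g | b
    · right
      refine ⟨g, rfl, ?_⟩
      have h1 := hstepG (j-1) hj1 g hwj
      rw [hsucc, hcj] at h1
      exact h1
    · cases b with
      | true =>
        have h1 := hstepX (j-1) hj1 hwj
        rw [hsucc, hcj, Function.update_of_ne hA2, hA0] at h1
        cases h1
      | false =>
        have h1 := hstepXi (j-1) hj1 hwj
        rw [hsucc, hcj] at h1
        rcases update_some_iff.mp h1 with ⟨h2, -⟩ | ⟨-, h3⟩
        · exact Or.inl ⟨rfl, h2⟩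
        · exact absurd h3 (hA1 _)
  have hproduce : ∀ j, j < w.length → Avoid s n (c j) → c j ≠ n' →
      ∃ g : ↥G, w[j]! = Sum.inl g ∧ c (j+1) = (g : Equiv.Perm ℕ)⁻¹ (c j) := by
    intro j hj hAv hvn
    obtain ⟨hv0, hv1, hv2⟩ := hAv
    rcases hwj : w[j]! with g | b
    · refine ⟨g, rfl, ?_⟩
      have h1 := hstepG j hj g hwj
      rw [h1, perm_inv_apply_self]
    · exfalso
      cases b with
      | true =>
        have h1 := hstepX j hj hwj
        rcases update_some_iff.mp h1 with ⟨-, h2⟩ | ⟨-, h3⟩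
        · exact hvn h2
        · exact hv1 _ h3
      | false =>
        have h1 := hstepXi j hj hwj
        rcases update_some_iff.mp h1 with ⟨h2, -⟩ | ⟨-, h3⟩
        · exact hv2 h2
        · rw [hv0] at h3; cases h3
  have hconsume : ∀ j, 0 < j → j ≤ w.length → Avoid s n (c j) → c j ≠ n' →
      ∃ g : ↥G, w[j-1]! = Sum.inl g ∧ c (j-1) = (g : Equiv.Perm ℕ) (c j) := by
    intro j hj0 hjL hAv hvn
    obtain ⟨hv0, hv1, hv2⟩ := hAv
    have hj1 : j - 1 < w.length := by omega
    have hsucc : j - 1 + 1 = j := by omega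
    rcases hwj : w[j-1]! with g | b
    · refine ⟨g, rfl, ?_⟩
      have h1 := hstepG (j-1) hj1 g hwj
      rw [hsucc] at h1
      exact h1
    · exfalso
      cases b with
      | true =>
        have h1 := hstepX (j-1) hj1 hwj
        rw [hsucc] at h1
        rcases update_some_iff.mp h1 with ⟨h2, -⟩ | ⟨-, h3⟩
        · exact hv2 h2
        · rw [hv0] at h3; cases h3
      | false =>
        have h1 := hstepXi (j-1) hj1 hwj
        rw [hsucc] at h1
        rcases update_some_iff.mp h1 with ⟨-, h2⟩ | ⟨-, h3⟩
        · exact hvn h2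
        · exact hv1 _ h3
  have hgEnd1 : ∀ j, j < w.length → c j = n' → ∀ g : ↥G, w[j]! = Sum.inl g →
      j + 1 = w.length := by
    intro j hj hcj g hwj
    by_contra hne
    have hj1 : j + 1 < w.length := by omega
    obtain ⟨hB1, hB2, hB3⟩ := hg1 g (hwj ▸ hmem j hj)
    have hc1 : c (j+1) = (g : Equiv.Perm ℕ)⁻¹ n' := by
      have h1 := hstepG j hj g hwj
      rw [hcj] at h1
      rw [h1, perm_inv_apply_self]
    have hCn : c (j+1) ≠ n' := by
      rw [hc1]
      intro hE
      apply hB3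
      have h2 := congrArg (g : Equiv.Perm ℕ) hE
      rw [perm_apply_inv_self] at h2
      exact h2.symm
    obtain ⟨h', hwj1, -⟩ := hproduce (j+1) hj1 (by rw [hc1]; exact hB2) hCn
    have h2 := hchain j hj1
    rw [hwj, hwj1] at h2
    exact h2
  have hgEnd2 : ∀ j, 0 < j → j ≤ w.length → c j = n' → ∀ g : ↥G, w[j-1]! = Sum.inl g →
      j = 1 := by
    intro j hj0 hjL hcj g hwj
    by_contra hne
    have hj2 : 2 ≤ j := by omega
    obtain ⟨hB1, hB2, hB3⟩ := hg1 g (hwj ▸ hmem (j-1) (by omega))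
    have hc1 : c (j-1) = (g : Equiv.Perm ℕ) n' := by
      have h1 := hstepG (j-1) (by omega) g hwj
      rw [(show j - 1 + 1 = j by omega), hcj] at h1
      exact h1
    obtain ⟨h', hwj2, -⟩ := hconsume (j-1) (by omega) (by omega)
      (by rw [hc1]; exact hB1) (by rw [hc1]; exact hB3)
    have h2 := hchain (j-2) (by omega)
    rw [(show j - 1 - 1 = j - 2 by omega)] at hwj2
    rw [(show j - 2 + 1 = j - 1 by omega), hwj2, hwj] at h2
    exact h2
  -- main split
  by_cases hall : ∀ j, j ≤ w.length → c j ≠ n'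
  · -- n' never occurs: transfer the computation to s
    have key : ∀ d, d ≤ w.length →
        ev G s (w.drop (w.length - d)) m = some (c (w.length - d)) := by
      intro d
      induction d with
      | zero =>
        intro _
        rw [Nat.sub_zero, List.drop_length, hcL w.length le_rfl]
        rfl
      | succ d ih =>
        intro hd
        have hdl := ih (by omega)
        have hjL : w.length - (d+1) < w.length := by omega
        have hjs : w.length - (d+1) + 1 = w.length - d := by omega
        rw [ev_drop s w m hjL, hjs, hdl, Option.bind_some,
          ← getElem!_pos w _ hjL]
        rcases hwj : w[w.length - (d+1)]! with g | b
        · simp only [lEval]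
          have h1 := hstepG _ hjL g hwj
          rw [hjs] at h1
          rw [← h1]
        · cases b with
          | true =>
            have h1 := hstepX _ hjL hwj
            rw [hjs] at h1
            rcases update_some_iff.mp h1 with ⟨-, h3⟩ | ⟨h2, h3⟩
            · exact absurd h3 (hall _ (by omega))
            · simpa only [lEval] using h3
          | false =>
            have h1 := hstepXi _ hjL hwj
            rw [hjs] at h1
            rcases update_some_iff.mp h1 with ⟨-, h3⟩ | ⟨h2, h3⟩
            · exact absurd h3 (hall _ (by omega))
            · simp only [lEval]
              exact some_pinv hinj h3
    have h1 := key w.length le_rfl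
    rw [Nat.sub_self, List.drop_zero, hc0] at h1
    exact h1
  · -- n' occurs in the orbit: derive a contradiction
    push_neg at hall
    obtain ⟨j0, hj0L, hj0⟩ := hall
    by_cases hLz : w.length = 0
    · rw [List.length_eq_zero_iff.mp hLz]
      rfl
    exfalso
    by_cases hmn : m = n'
    · -- the fixed point is n' itself
      have hcLn : c w.length = n' := by rw [hcL _ le_rfl]; exact hmn
      have hc0n : c 0 = n' := by rw [hc0]; exact hmn
      have hlast : w[w.length - 1]! = Sum.inr false := by
        rcases hexit w.length (by omega) le_rfl hcLn with ⟨h1, -⟩ | ⟨g, hwg, hcg⟩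
        · exact h1
        · exfalso
          have hLeq : w.length = 1 := hgEnd2 w.length (by omega) le_rfl hcLn g hwg
          have hB3 := (hg1 g (hwg ▸ hmem (w.length - 1) (by omega))).2.2
          apply hB3
          have h2 : c (w.length - 1) = n' := by rw [hLeq]; exact hc0n
          rw [h2] at hcg
          exact hcg.symm
      have hfirst : w[0]! = Sum.inr true := by
        rcases hentry 0 (by omega) hc0n with ⟨h1, -⟩ | ⟨g, hwg, hcg⟩
        · exact h1
        · exfalso
          have hLeq : 0 + 1 = w.length := hgEnd1 0 (by omega) hc0n g hwg
          have hB3 := (hg1 g (hwg ▸ hmem 0 (by omega))).2.2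
          have h2 : c (0+1) = n' := by rw [(show 0 + 1 = w.length by omega)]; exact hcLn
          rw [h2] at hcg
          apply hB3
          have h3 := congrArg (g : Equiv.Perm ℕ) hcg
          rw [perm_apply_inv_self] at h3
          exact h3
      have hL2 : 2 ≤ w.length := by
        by_contra hcon
        rw [(show (0:ℕ) = w.length - 1 by omega)] at hfirst
        rw [hfirst] at hlast
        exact absurd hlast (by simp)
      exact conj1 w hw hL2
        ((getElem!_pos w 0 (by omega)).symm.trans hfirst)
        ((getElem!_pos w (w.length - 1) (by omega)).symm.trans hlast)
    · -- m ≠ n'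
      have hj00 : 0 < j0 := by
        rcases Nat.eq_zero_or_pos j0 with rfl | h
        · rw [hc0] at hj0; exact absurd hj0 hmn
        · exact h
      have hj0Lt : j0 < w.length := by
        rcases eq_or_lt_of_le hj0L with rfl | h
        · rw [hcL _ le_rfl] at hj0; exact absurd hj0 hmn
        · exact h
      rcases hexit j0 hj00 hj0L hj0 with ⟨hxw, hxc⟩ | ⟨h, hwh, hch⟩
      · -- exit via X⁻¹ : entry must be a group letter ending the word
        rcases hentry j0 hj0Lt hj0 with ⟨hyw, -⟩ | ⟨g, hwg, hcg⟩
        · have h2 := hchain (j0 - 1) (by omega)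
          rw [(show j0 - 1 + 1 = j0 by omega), hxw, hyw] at h2
          exact Bool.false_ne_true h2
        · have hEnd : j0 + 1 = w.length := hgEnd1 j0 hj0Lt hj0 g hwg
          have hmg : m = (g : Equiv.Perm ℕ)⁻¹ n' := by
            rw [hEnd, hcL _ le_rfl] at hcg
            exact hcg
          obtain ⟨hB1g, hB2g, hB3g⟩ := hg1 g (hwg ▸ hmem j0 hj0Lt)
          have hmAv : Avoid s n m := by rw [hmg]; exact hB2g
          obtain ⟨k, hwk, hck⟩ := hproduce 0 (by omega)
            (by rw [hc0]; exact hmAv) (by rw [hc0]; exact hmn)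
          by_cases hgk : (g : Equiv.Perm ℕ) * (k : Equiv.Perm ℕ) = 1
          · -- k = g⁻¹ and c 1 = n'
            have hc1n : c (0+1) = n' := by
              rw [hck, hc0, hmg, ← Equiv.Perm.mul_apply, ← mul_inv_rev, hgk]
              simp
            by_cases hj01 : j0 = 1
            · have h2 := hchain 0 (by omega)
              rw [hwk] at h2
              simp only [zero_add] at h2
              rw [hj01] at hwg
              rw [hwg] at h2
              exact h2
            · have hj02 : 2 ≤ j0 := by omega
              have hc1n' : c 1 = n' := by simpa using hc1n
              have hf2 : w[1]! = Sum.inr true := by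
                rcases hentry 1 (by omega) hc1n' with ⟨h1, -⟩ | ⟨g', hwg', -⟩
                · exact h1
                · have := hgEnd1 1 (by omega) hc1n' g' hwg'
                  omega
              have hL4 : 4 ≤ w.length := by
                by_contra hcon
                have hj0e : j0 = 2 := by omega
                rw [hj0e, (show (2:ℕ) - 1 = 1 by norm_num), hf2] at hxw
                exact absurd hxw (by simp)
              have hgk' : g * k = (1 : ↥G) := by
                apply Subtype.coe_injective
                push_cast
                exact hgk
              have hkg : k = g⁻¹ := (inv_eq_of_mul_eq_one_right hgk').symm
              apply conj2 w hw g hL4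
              · rw [← getElem!_pos, hwk, hkg]
              · rw [← getElem!_pos]; exact hf2
              · rw [← getElem!_pos, (show w.length - 2 = j0 - 1 by omega)]
                exact hxw
              · rw [← getElem!_pos, (show w.length - 1 = j0 by omega)]
                exact hwg
          · obtain ⟨hB1, hB2, hB3⟩ := hg2 g k (hwg ▸ hmem j0 hj0Lt)
              (hwk ▸ hmem 0 (by omega)) hgk
            have hc1 : c (0+1) = ((g : Equiv.Perm ℕ) * (k : Equiv.Perm ℕ))⁻¹ n' := by
              rw [hck, hc0, hmg, mul_inv_rev, Equiv.Perm.mul_apply]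
            have h1L : 1 < w.length := by omega
            have hAv1 : Avoid s n (c 1) := by
              have : c 1 = c (0+1) := by norm_num
              rw [this, hc1]; exact hB2
            have hne1 : c 1 ≠ n' := by
              have : c 1 = c (0+1) := by norm_num
              rw [this, hc1]
              intro hE
              apply hB3
              have h3 := congrArg ((g : Equiv.Perm ℕ) * (k : Equiv.Perm ℕ)) hE
              rw [perm_apply_inv_self] at h3
              exact h3.symm
            obtain ⟨k', hwk', -⟩ := hproduce 1 h1L hAv1 hne1
            have h2 := hchain 0 (by omega)
            rw [hwk] at h2
            simp only [zero_add] at h2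
            rw [hwk'] at h2
            exact h2
      · -- exit via a group letter: j0 = 1, m = h n'
        have hj01 : j0 = 1 := hgEnd2 j0 hj00 hj0L hj0 h hwh
        have hm_eq : m = (h : Equiv.Perm ℕ) n' := by
          rw [← hc0, (show (0:ℕ) = j0 - 1 by omega)]
          exact hch
        obtain ⟨hB1h, hB2h, hB3h⟩ := hg1 h (hwh ▸ hmem (j0-1) (by omega))
        have hmAv : Avoid s n m := by rw [hm_eq]; exact hB1h
        obtain ⟨g, hwg, hcg⟩ := hconsume w.length (by omega) le_rfl
          (by rw [hcL _ le_rfl]; exact hmAv) (by rw [hcL _ le_rfl]; exact hmn)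
        have hL2 : 2 ≤ w.length := by omega
        by_cases hgh : (g : Equiv.Perm ℕ) * (h : Equiv.Perm ℕ) = 1
        · have hcLn : c (w.length - 1) = n' := by
            rw [hcg, hcL _ le_rfl, hm_eq, ← Equiv.Perm.mul_apply, hgh]
            rfl
          by_cases hLe2 : w.length = 2
          · have h2 := hchain 0 (by omega)
            rw [(show j0 - 1 = 0 by omega)] at hwh
            rw [hwh] at h2
            simp only [zero_add] at h2
            rw [(show (1:ℕ) = w.length - 1 by omega), hwg] at h2
            exact h2
          · have hL3 : 3 ≤ w.length := by omega
            have hc1n : c 1 = n' := by rw [← hj01]; exact hj0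
            have hf2 : w[1]! = Sum.inr true := by
              rcases hentry 1 (by omega) hc1n with ⟨h1, -⟩ | ⟨g', hwg', -⟩
              · exact h1
              · have := hgEnd1 1 (by omega) hc1n g' hwg'
                omega
            have hf3 : w[w.length - 2]! = Sum.inr false := by
              rcases hexit (w.length - 1) (by omega) (by omega) hcLn with
                ⟨h1, -⟩ | ⟨g', hwg', -⟩
              · rw [(show w.length - 1 - 1 = w.length - 2 by omega)] at h1
                exact h1
              · have := hgEnd2 (w.length - 1) (by omega) (by omega) hcLn g' hwg'
                omega
            have hL4 : 4 ≤ w.length := by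
              by_contra hcon
              rw [(show w.length - 2 = 1 by omega), hf2] at hf3
              exact absurd hf3 (by simp)
            have hgh' : g * h = (1 : ↥G) := by
              apply Subtype.coe_injective
              push_cast
              exact hgh
            have hhg : h = g⁻¹ := (inv_eq_of_mul_eq_one_right hgh').symm
            apply conj2 w hw g hL4
            · rw [← getElem!_pos, (show (0:ℕ) = j0 - 1 by omega), hwh, hhg]
            · rw [← getElem!_pos]; exact hf2
            · rw [← getElem!_pos]; exact hf3
            · rw [← getElem!_pos]; exact hwg
        · obtain ⟨hB1, hB2, hB3⟩ := hg2 g h (hwg ▸ hmem (w.length - 1) (by omega))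
            (hwh ▸ hmem (j0-1) (by omega)) hgh
          have hcL1 : c (w.length - 1) = ((g : Equiv.Perm ℕ) * (h : Equiv.Perm ℕ)) n' := by
            rw [hcg, hcL _ le_rfl, hm_eq, Equiv.Perm.mul_apply]
          obtain ⟨k', hwk', -⟩ := hconsume (w.length - 1) (by omega) (by omega)
            (by rw [hcL1]; exact hB1) (by rw [hcL1]; exact hB3)
          have h2 := hchain (w.length - 2) (by omega)
          rw [(show w.length - 1 - 1 = w.length - 2 by omega)] at hwk'
          rw [(show w.length - 2 + 1 = w.length - 1 by omega), hwk', hwg] at h2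
          exact h2

/-- Per-letter bad set. -/
def B1 {G : Subgroup (Equiv.Perm ℕ)} (s : ℕ → Option ℕ) (n : ℕ) : Letter G → Set ℕ
  | Sum.inl g => ((g : Equiv.Perm ℕ) ⁻¹' {x | ¬ Avoid s n x}) ∪
      (((g : Equiv.Perm ℕ)⁻¹ : Equiv.Perm ℕ) ⁻¹' {x | ¬ Avoid s n x}) ∪
      {x | (g : Equiv.Perm ℕ) x = x}
  | Sum.inr _ => ∅

open Classical in
/-- Per-pair-of-letters bad set. -/
noncomputable def B2 {G : Subgroup (Equiv.Perm ℕ)} (s : ℕ → Option ℕ) (n : ℕ) :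
    Letter G → Letter G → Set ℕ
  | Sum.inl g, Sum.inl h =>
    if (g : Equiv.Perm ℕ) * (h : Equiv.Perm ℕ) = 1 then ∅ else
      (((g : Equiv.Perm ℕ) * (h : Equiv.Perm ℕ)) ⁻¹' {x | ¬ Avoid s n x}) ∪
      ((((g : Equiv.Perm ℕ) * (h : Equiv.Perm ℕ))⁻¹ : Equiv.Perm ℕ) ⁻¹' {x | ¬ Avoid s n x}) ∪
      {x | ((g : Equiv.Perm ℕ) * (h : Equiv.Perm ℕ)) x = x}
  | _, _ => ∅



/-- Domain Extension: let `𝓖` be a cofinitary group, `s` a finite injective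
partial function on `ω`, `w ∈ W_{𝓖,X}` a (reduced) word with no proper conjugate subwords,
and `n ∉ dom(s)`. Then for all but finitely many `n'`, the extension
`s' = s ∪ {(n,n')}` is a finite injective partial function and `fix(w[s']) = fix(w[s])`. -/
theorem stmt_12 (G : Subgroup (Equiv.Perm ℕ)) (hG : Cofinitary G)
    (s : ℕ → Option ℕ) (hs : FinInj s)
    (w : List (Letter G)) (hred : ReducedWord G w) (hw : NoProperConjSub G w)
    (n : ℕ) (hn : s n = none) :
    {n' : ℕ | ¬ (FinInj (Function.update s n (some n')) ∧
        fixSet (ev G (Function.update s n (some n')) w) = fixSet (ev G s w))}.Finite := by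
  classical
  obtain ⟨hinj, hfin⟩ := hs
  have hNAfin : {x | ¬ Avoid s n x}.Finite := by
    have hsub : {x | ¬ Avoid s n x} ⊆
        {x | s x ≠ none} ∪ ((fun a => (s a).getD 0) '' {x | s x ≠ none}) ∪ {n} := by
      intro x hx
      simp only [Set.mem_setOf_eq, Avoid] at hx
      push_neg at hx
      by_cases h1 : s x = none
      · by_cases h2 : ∃ a, s a = some x
        · obtain ⟨a, ha⟩ := h2
          exact Or.inl (Or.inr ⟨a, by simp [ha], by simp [ha]⟩)
        · exact Or.inr (hx h1 (fun a ha => h2 ⟨a, ha⟩))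
      · exact Or.inl (Or.inl h1)
    exact ((hfin.union (hfin.image _)).union (Set.finite_singleton n)).subset hsub
  have hB1fin : ∀ a ∈ w, (B1 (G := G) s n a).Finite := by
    intro a ha
    match a with
    | Sum.inl g =>
      refine (Set.Finite.union (Set.Finite.union ?_ ?_) ?_)
      · exact hNAfin.preimage ((Equiv.injective _).injOn)
      · exact hNAfin.preimage ((Equiv.injective _).injOn)
      · exact hG g (hred.1 g ha)
    | Sum.inr b => exact Set.finite_empty
  have hB2fin : ∀ a ∈ w, ∀ b ∈ w, (B2 (G := G) s n a b).Finite := by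
    intro a ha b hb
    match a, b with
    | Sum.inl g, Sum.inl h =>
      simp only [B2]
      split_ifs with hcond
      · exact Set.finite_empty
      · refine (Set.Finite.union (Set.Finite.union ?_ ?_) ?_)
        · exact hNAfin.preimage ((Equiv.injective _).injOn)
        · exact hNAfin.preimage ((Equiv.injective _).injOn)
        · have hne : g * h ≠ (1 : ↥G) := by
            intro e
            apply hcond
            rw [← Subgroup.coe_mul, e]
            rfl
          have := hG (g * h) hne
          simpa [Subgroup.coe_mul] using this
    | Sum.inl g, Sum.inr b' => exact Set.finite_empty
    | Sum.inr b', _ => exact Set.finite_empty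
  have hBadFin : ({x | ¬ Avoid s n x} ∪ (⋃ a ∈ {a : Letter G | a ∈ w}, B1 s n a) ∪
      (⋃ a ∈ {a : Letter G | a ∈ w}, ⋃ b ∈ {b : Letter G | b ∈ w}, B2 s n a b)).Finite := by
    refine (Set.Finite.union (Set.Finite.union hNAfin ?_) ?_)
    · exact Set.Finite.biUnion (w.finite_toSet) (fun a ha => hB1fin a ha)
    · exact Set.Finite.biUnion (w.finite_toSet)
        (fun a ha => Set.Finite.biUnion (w.finite_toSet) (fun b hb => hB2fin a ha b hb))
  apply hBadFin.subset
  intro n' hn'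
  simp only [Set.mem_setOf_eq] at hn'
  by_contra hn'B
  apply hn'
  have hnNA : Avoid s n n' := by
    by_contra hcon
    exact hn'B (Or.inl (Or.inl hcon))
  have hB1not : ∀ a, a ∈ w → n' ∉ B1 (G := G) s n a := fun a ha hm =>
    hn'B (Or.inl (Or.inr (Set.mem_biUnion ha hm)))
  have hB2not : ∀ a b, a ∈ w → b ∈ w → n' ∉ B2 (G := G) s n a b := fun a b ha hb hm =>
    hn'B (Or.inr (Set.mem_biUnion ha (Set.mem_biUnion hb hm)))
  have hg1 : ∀ g : ↥G, Sum.inl g ∈ w → Avoid s n ((g : Equiv.Perm ℕ) n') ∧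
      Avoid s n ((g : Equiv.Perm ℕ)⁻¹ n') ∧ (g : Equiv.Perm ℕ) n' ≠ n' := by
    intro g hgw
    have h1 := hB1not _ hgw
    simp only [B1, Set.mem_union, Set.mem_preimage, Set.mem_setOf_eq, not_or] at h1
    obtain ⟨⟨ha, hb⟩, hc⟩ := h1
    exact ⟨not_not.mp ha, not_not.mp hb, hc⟩
  have hg2 : ∀ g h : ↥G, Sum.inl g ∈ w → Sum.inl h ∈ w →
      (g : Equiv.Perm ℕ) * (h : Equiv.Perm ℕ) ≠ 1 →
      Avoid s n (((g : Equiv.Perm ℕ) * (h : Equiv.Perm ℕ)) n') ∧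
      Avoid s n ((((g : Equiv.Perm ℕ) * (h : Equiv.Perm ℕ))⁻¹) n') ∧
      ((g : Equiv.Perm ℕ) * (h : Equiv.Perm ℕ)) n' ≠ n' := by
    intro g h hgw hhw hne
    have h1 := hB2not _ _ hgw hhw
    simp only [B2, if_neg hne, Set.mem_union, Set.mem_preimage, Set.mem_setOf_eq, not_or] at h1
    obtain ⟨⟨ha, hb⟩, hc⟩ := h1
    exact ⟨not_not.mp ha, not_not.mp hb, hc⟩
  refine ⟨⟨update_inj hinj hnNA.2.1, ?_⟩, ?_⟩
  · apply (hfin.union (Set.finite_singleton n)).subset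
    intro x hx
    by_cases hxn : x = n
    · exact Or.inr hxn
    · exact Or.inl (by simpa [Function.update_of_ne hxn] using hx)
  · ext m
    simp only [fixSet, Set.mem_setOf_eq]
    constructor
    · intro hm
      exact main_aux s hinj w hred hw n hn n' hnNA hg1 hg2 m hm
    · intro hm
      exact ev_mono s hinj hn hnNA.2.1 w m m hm
end

section
/- For any analytic hypergraph G = (X, H) on a Polish space, there exists a Borel maximal G-discrete set if and only if there exists an analytic maximal G-discrete set. -/
open MeasureTheory

/-- `D` is `G`-discrete for the hypergraph with hyperedges `H` (finite subsets of `X`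
encoded as lists without duplicates): no hyperedge has all its vertices in `D`. -/
def HDiscrete {X : Type*} (H : Set (List X)) (D : Set X) : Prop :=
  ∀ l ∈ H, ¬ ∀ x ∈ l, x ∈ D

/-- `D` is a maximal `G`-discrete set. -/
def MaxHDiscrete {X : Type*} (H : Set (List X)) (D : Set X) : Prop :=
  HDiscrete H D ∧ ∀ D' : Set X, HDiscrete H D' → D ⊆ D' → D' = D

open Set Filter Topology

private theorem tendsto_getD_aux {α : Type*} [TopologicalSpace α] :
    ∀ (l : List α) (i : ℕ) (x : α),
      Tendsto (fun p : List α × α => p.1.getD i p.2) (𝓝 l ×ˢ 𝓝 x) (𝓝 (l.getD i x)) := by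
  intro l
  induction l with
  | nil =>
      intro i x
      rw [nhds_nil, Filter.pure_prod, Filter.tendsto_map'_iff]
      simpa [Function.comp_def] using (continuous_id'.tendsto x)
  | cons a l ih =>
      intro i x
      have hc : 𝓝 (a::l) = (𝓝 a ×ˢ 𝓝 l).map fun p : α × List α => p.1::p.2 := by
        simp only [nhds_cons, Filter.prod_eq, (Filter.map_def _ _).symm,
          (Filter.seq_eq_filter_seq _ _).symm]
        simp [-Filter.map_def, Function.comp_def, functor_norm]
      rw [hc, Filter.prod_map_left, Filter.tendsto_map'_iff]
      cases i with
      | zero =>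
          simpa [Function.comp_def, List.getD_cons_zero] using (tendsto_fst.comp tendsto_fst)
      | succ i =>
          have : Tendsto (fun p : (α × List α) × α => (p.1.2, p.2))
              ((𝓝 a ×ˢ 𝓝 l) ×ˢ 𝓝 x) (𝓝 l ×ˢ 𝓝 x) :=
            (tendsto_snd.comp tendsto_fst).prodMk tendsto_snd
          simpa [Function.comp_def, List.getD_cons_succ] using (ih i x).comp this

private theorem continuous_getD {α : Type*} [TopologicalSpace α] (i : ℕ) :
    Continuous (fun p : List α × α => p.1.getD i p.2) := by
  rw [continuous_iff_continuousAt]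
  rintro ⟨l, x⟩
  rw [ContinuousAt, nhds_prod_eq]
  exact tendsto_getD_aux l i x

private theorem mem_all_iff_getD {α : Type*} (l : List α) (S : Set α) (x : α) :
    (∀ a ∈ l, a ∈ S ∨ a = x) ↔ ∀ i : ℕ, l.getD i x ∈ S ∨ l.getD i x = x := by
  constructor
  · intro h i
    rcases lt_or_ge i l.length with hi | hi
    · rw [List.getD_eq_getElem _ _ hi]; exact h _ (List.getElem_mem hi)
    · rw [List.getD_eq_default _ _ hi]; exact Or.inr rfl
  · intro h a ha
    obtain ⟨i, hi, rfl⟩ := List.getElem_of_mem ha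
    have := h i
    rwa [List.getD_eq_getElem _ _ hi] at this

/-- for an analytic hypergraph `G = (X, H)` on a Polish space (hyperedges
being finite sets of size at least 2, encoded as duplicate-free lists), there is a Borel
maximal `G`-discrete set iff there is an analytic maximal `G`-discrete set. -/
theorem stmt_18 {X : Type} [TopologicalSpace X] [PolishSpace X]
    [MeasurableSpace X] [BorelSpace X]
    (H : Set (List X)) (hH : AnalyticSet H)
    (hedge : ∀ l ∈ H, l.Nodup ∧ 2 ≤ l.length) :
    (∃ D : Set X, MeasurableSet D ∧ MaxHDiscrete H D) ↔
      (∃ D : Set X, AnalyticSet D ∧ MaxHDiscrete H D) := by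
  constructor
  · rintro ⟨D, hD, hmax⟩
    exact ⟨D, hD.analyticSet, hmax⟩
  · rintro ⟨D, hD, hdisc, hmaxl⟩
    refine ⟨D, ?_, hdisc, hmaxl⟩
    apply AnalyticSet.measurableSet_of_compl hD
    have hcompl : Dᶜ = {x | ∃ l ∈ H, ∀ a ∈ l, a ∈ D ∨ a = x} := by
      ext x
      simp only [mem_compl_iff, mem_setOf_eq]
      constructor
      · intro hx
        by_contra hcon
        push_neg at hcon
        have hd2 : HDiscrete H (D ∪ {x}) := by
          intro l hl hall
          obtain ⟨a, ha, haD, hax⟩ := hcon l hl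
          rcases hall a ha with h | h
          · exact haD h
          · exact hax h
        have := hmaxl (D ∪ {x}) hd2 subset_union_left
        exact hx (this ▸ (mem_union_right D rfl))
      · rintro ⟨l, hl, hall⟩ hxD
        apply hdisc l hl
        intro a ha
        rcases hall a ha with h | h
        · exact h
        · exact h ▸ hxD
    rw [hcompl]
    rw [AnalyticSet] at hH
    rcases hH with hemp | ⟨g, gcont, hrange⟩
    · have : {x | ∃ l ∈ H, ∀ a ∈ l, a ∈ D ∨ a = x} = (∅ : Set X) := by
        ext x; simp [hemp]
      rw [this]; exact analyticSet_empty
    · have key : {x | ∃ l ∈ H, ∀ a ∈ l, a ∈ D ∨ a = x} =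
          Prod.fst '' (⋂ i : ℕ, (fun p : X × (ℕ → ℕ) => (p.1, (g p.2).getD i p.1)) ⁻¹'
            ((Prod.snd ⁻¹' D) ∪ {p : X × X | p.2 = p.1})) := by
        ext x
        simp only [mem_setOf_eq, mem_image, mem_iInter, mem_preimage, mem_union]
        constructor
        · rintro ⟨l, hl, hall⟩
          rw [← hrange] at hl; obtain ⟨y, rfl⟩ := hl
          exact ⟨(x, y), fun i => (mem_all_iff_getD (g y) D x).1 hall i, rfl⟩
        · rintro ⟨⟨x', y⟩, hy, rfl⟩
          exact ⟨g y, by rw [← hrange]; exact mem_range_self y,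
            (mem_all_iff_getD (g y) D x').2 hy⟩
      rw [key]
      apply AnalyticSet.image_of_continuous _ continuous_fst
      apply AnalyticSet.iInter
      intro i
      apply AnalyticSet.preimage
      · rw [Set.union_eq_iUnion]
        apply AnalyticSet.iUnion
        intro b
        cases b
        · exact (isClosed_eq continuous_snd continuous_fst).analyticSet
        · exact hD.preimage continuous_snd
      · exact continuous_fst.prodMk ((continuous_getD i).comp
          ((gcont.comp continuous_snd).prodMk continuous_fst))
end
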